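/- If N is a uniform module and P and Q are strongly N-tight modules, then P ⊕ Q is strongly N-tight. -/

import Mathlib

/- Common definitions: essential submodules, (essential) embeddings, injective hulls,
   the four relative tightness notions, weak injectivity, uniformity, indecomposability,
   socle, and the global (finitely-generated-test) versions of the notions. -/

universe u v

section Defs

variable (R : Type*) [Ring R]

/-- A submodule `S` of `A` is essential if it intersects every nonzero submodule nontrivially. -/
def EssIn {A : Type*} [AddCommGroup A] [Module R A] (S : Submodule R A) : Prop :=
  ∀ T : Submodule R A, T ⊓ S = ⊥ → T = ⊥

variable (M N E A B : Type*)
variable [AddCommGroup M] [Module R M] [AddCommGroup N] [Module R N]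
variable [AddCommGroup E] [Module R E] [AddCommGroup A] [Module R A]
variable [AddCommGroup B] [Module R B]

/-- `A` embeds in `B`. -/
def Embeds : Prop := ∃ f : A →ₗ[R] B, Function.Injective f

/-- `A` embeds essentially in `B` (monomorphism with essential image). -/
def EssEmbeds : Prop := ∃ f : A →ₗ[R] B, Function.Injective f ∧ EssIn R (LinearMap.range f)

/-- `E` is an injective hull of `M`: `E` is injective and `M` embeds essentially in `E`. -/
def IsInjHull : Prop :=
  Module.Injective R E ∧ ∃ i : M →ₗ[R] E, Function.Injective i ∧ EssIn R (LinearMap.range i)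

/-- `M` is `N`-tight (w.r.t. the hull `E` of `M`). -/
def NTight : Prop := ∀ K : Submodule R N, Embeds R (N ⧸ K) E → Embeds R (N ⧸ K) M

/-- `M` is essentially `N`-tight. -/
def EssNTight : Prop := ∀ K : Submodule R N, EssEmbeds R (N ⧸ K) E → EssEmbeds R (N ⧸ K) M

/-- `M` is strongly `N`-tight. -/
def StrNTight : Prop := ∀ K : Submodule R N, EssEmbeds R (N ⧸ K) E → Embeds R (N ⧸ K) M

/-- `M` is roughly `N`-tight. -/
def RghNTight : Prop := ∀ K : Submodule R N, Embeds R (N ⧸ K) E → EssEmbeds R (N ⧸ K) M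

/-- `M` is weakly `N`-injective (w.r.t. the hull `E` of `M`). -/
def WeaklyNInj : Prop :=
  ∀ σ : N →ₗ[R] E, ∃ X : Submodule R E, LinearMap.range σ ≤ X ∧ Nonempty (X ≃ₗ[R] M)

/-- `A` is uniform: nonzero, and every nonzero submodule is essential. -/
def IsUniform : Prop := Nontrivial A ∧ ∀ S : Submodule R A, S ≠ ⊥ → EssIn R S

/-- `A` is indecomposable: nonzero and with no nontrivial direct summand. -/
def Indecomp : Prop := Nontrivial A ∧ ∀ S : Submodule R A, (∃ T, IsCompl S T) → S = ⊥ ∨ S = ⊤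

/-- The socle: sum of all simple submodules. -/
def Socle : Submodule R A := sSup {S : Submodule R A | IsSimpleModule R ↥S}

/-- `M` is tight: `N`-tight for every finitely generated `N`. -/
def Tight : Prop := ∀ (N' : Type v) [AddCommGroup N'] [Module R N'],
  Module.Finite R N' → NTight R M N' E

/-- `M` is essentially tight. -/
def EssTight : Prop := ∀ (N' : Type v) [AddCommGroup N'] [Module R N'],
  Module.Finite R N' → EssNTight R M N' E

/-- `M` is strongly tight. -/
def StrTight : Prop := ∀ (N' : Type v) [AddCommGroup N'] [Module R N'],
  Module.Finite R N' → StrNTight R M N' E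

/-- `M` is roughly tight. -/
def RghTight : Prop := ∀ (N' : Type v) [AddCommGroup N'] [Module R N'],
  Module.Finite R N' → RghNTight R M N' E

/-- `M` is weakly injective: weakly `N`-injective for every finitely generated `N`. -/
def WeaklyInj : Prop := ∀ (N' : Type v) [AddCommGroup N'] [Module R N'],
  Module.Finite R N' → WeaklyNInj R M N' E

end Defs

section Statements

variable {R : Type*} [Ring R]

/-- If N is uniform and P, Q are strongly N-tight, then so is P ⊕ Q. -/
theorem stronglyTight_prod (N P Q EP EQ : Type*)
    [AddCommGroup N] [Module R N] [AddCommGroup P] [Module R P]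
    [AddCommGroup Q] [Module R Q] [AddCommGroup EP] [Module R EP]
    [AddCommGroup EQ] [Module R EQ]
    (hN : IsUniform R N) (hEP : IsInjHull R P EP) (hEQ : IsInjHull R Q EQ)
    (hP : StrNTight R P N EP) (hQ : StrNTight R Q N EQ) :
    StrNTight R (P × Q) N (EP × EQ) := by
  intro K hK
  obtain ⟨f, hf, hess⟩ := hK
  -- projections composed with f ∘ mkQ
  set h1 : N →ₗ[R] EP := (LinearMap.fst R EP EQ).comp (f.comp K.mkQ) with hh1
  set h2 : N →ₗ[R] EQ := (LinearMap.snd R EP EQ).comp (f.comp K.mkQ) with hh2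
  set K1 : Submodule R N := LinearMap.ker h1 with hK1
  set K2 : Submodule R N := LinearMap.ker h2 with hK2
  -- range h1 is essential in EP
  have hrange1 : ∀ t : EP, (∃ x : N ⧸ K, f x = (t, 0)) → t ∈ LinearMap.range h1 := by
    intro t ⟨x, hx⟩
    obtain ⟨n, rfl⟩ := K.mkQ_surjective x
    exact ⟨n, show (f (K.mkQ n)).1 = t by rw [hx]⟩
  have hrange2 : ∀ t : EQ, (∃ x : N ⧸ K, f x = (0, t)) → t ∈ LinearMap.range h2 := by
    intro t ⟨x, hx⟩
    obtain ⟨n, rfl⟩ := K.mkQ_surjective x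
    exact ⟨n, show (f (K.mkQ n)).2 = t by rw [hx]⟩
  have hess1 : EssIn R (LinearMap.range h1) := by
    intro T hT
    have : (T.prod (⊥ : Submodule R EQ)) ⊓ LinearMap.range f = ⊥ := by
      rw [eq_bot_iff]
      rintro ⟨a, b⟩ ⟨⟨haT, hb⟩, x, hx⟩
      simp only [Submodule.mem_bot] at hb ⊢
      subst hb
      have ha : a ∈ T ⊓ LinearMap.range h1 := ⟨haT, hrange1 a ⟨x, hx⟩⟩
      rw [hT] at ha
      simp only [Submodule.mem_bot] at ha
      simp [ha]
    have := hess _ this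
    rw [eq_bot_iff]
    intro t ht
    have : (t, (0 : EQ)) ∈ T.prod (⊥ : Submodule R EQ) := ⟨ht, rfl⟩
    rw [‹T.prod ⊥ = ⊥›] at this
    simpa using congrArg Prod.fst (Submodule.mem_bot R |>.mp this)
  have hess2 : EssIn R (LinearMap.range h2) := by
    intro T hT
    have : ((⊥ : Submodule R EP).prod T) ⊓ LinearMap.range f = ⊥ := by
      rw [eq_bot_iff]
      rintro ⟨a, b⟩ ⟨⟨ha, hbT⟩, x, hx⟩
      simp only [Submodule.mem_bot] at ha ⊢
      subst ha
      have hb : b ∈ T ⊓ LinearMap.range h2 := ⟨hbT, hrange2 b ⟨x, hx⟩⟩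
      rw [hT] at hb
      simp only [Submodule.mem_bot] at hb
      simp [hb]
    have := hess _ this
    rw [eq_bot_iff]
    intro t ht
    have : ((0 : EP), t) ∈ (⊥ : Submodule R EP).prod T := ⟨rfl, ht⟩
    rw [‹Submodule.prod ⊥ T = ⊥›] at this
    simpa using congrArg Prod.snd (Submodule.mem_bot R |>.mp this)
  -- N/K1 embeds essentially into EP, so by hP it embeds into P
  obtain ⟨p, hp⟩ : Embeds R (N ⧸ K1) P := by
    refine hP K1 ⟨K1.liftQ h1 le_rfl, ?_, ?_⟩
    · rw [← LinearMap.ker_eq_bot]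
      exact Submodule.ker_liftQ_eq_bot _ _ _ le_rfl
    · rwa [Submodule.range_liftQ]
  obtain ⟨q, hq⟩ : Embeds R (N ⧸ K2) Q := by
    refine hQ K2 ⟨K2.liftQ h2 le_rfl, ?_, ?_⟩
    · rw [← LinearMap.ker_eq_bot]
      exact Submodule.ker_liftQ_eq_bot _ _ _ le_rfl
    · rwa [Submodule.range_liftQ]
  -- assemble N/K → P × Q
  set ψ : N →ₗ[R] P × Q := (p.comp K1.mkQ).prod (q.comp K2.mkQ) with hψ
  have hKψ : K ≤ LinearMap.ker ψ := by
    intro n hn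
    have hmk : K.mkQ n = 0 := (Submodule.Quotient.mk_eq_zero K).mpr hn
    have h1n : h1 n = 0 := by
      show (f (K.mkQ n)).1 = 0
      rw [hmk, map_zero]; rfl
    have h2n : h2 n = 0 := by
      show (f (K.mkQ n)).2 = 0
      rw [hmk, map_zero]; rfl
    have e1 : (K1.mkQ) n = 0 := (Submodule.Quotient.mk_eq_zero K1).mpr h1n
    have e2 : (K2.mkQ) n = 0 := (Submodule.Quotient.mk_eq_zero K2).mpr h2n
    simp only [LinearMap.mem_ker, hψ, LinearMap.prod_apply, LinearMap.comp_apply, Pi.prod,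
      Function.prod, Prod.mk_eq_zero]
    exact ⟨by simpa using congrArg p e1, by simpa using congrArg q e2⟩
  have hψK : LinearMap.ker ψ ≤ K := by
    intro n hn
    simp only [LinearMap.mem_ker, hψ, LinearMap.prod_apply, Pi.prod, LinearMap.comp_apply,
      Function.prod, Prod.mk_eq_zero] at hn
    have hn1 : h1 n = 0 := by
      have := hp (a₁ := K1.mkQ n) (a₂ := 0) (by simpa using hn.1)
      simpa [hK1, Submodule.Quotient.mk_eq_zero] using this
    have hn2 : h2 n = 0 := by
      have := hq (a₁ := K2.mkQ n) (a₂ := 0) (by simpa using hn.2)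
      simpa [hK2, Submodule.Quotient.mk_eq_zero] using this
    have : f (K.mkQ n) = 0 := by
      have e1 : (f (K.mkQ n)).1 = (0 : EP × EQ).1 := hn1
      have e2 : (f (K.mkQ n)).2 = (0 : EP × EQ).2 := hn2
      exact Prod.ext_iff.mpr ⟨e1, e2⟩
    have : K.mkQ n = 0 := hf (by simpa using this)
    simpa [Submodule.Quotient.mk_eq_zero] using this
  refine ⟨K.liftQ ψ hKψ, ?_⟩
  rw [← LinearMap.ker_eq_bot]
  exact Submodule.ker_liftQ_eq_bot _ _ _ hψK

end Statements
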